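/- Assume positive monotonicity: M1(ω) ≥ M0(ω) for every ω ∈ Ω. If P(Y=1, M=0 | X=1) > P(Y=1, M=0 | X=0), then the set of ω ∈ Ω satisfying: M1(ω)=M0(ω)=0, Y1(ω)−Y0(ω)=1, Y_{1,M1(ω)}(ω) − Y_{0,M0(ω)}(ω) = 1, Y_{1,M1(ω)}(ω) − Y_{0,M1(ω)}(ω) = 1, Y_{1,M0(ω)}(ω) − Y_{0,M0(ω)}(ω) = 1, Y_{1,M1(ω)}(ω) − Y_{1,M0(ω)}(ω) = 0 and Y_{0,M1(ω)}(ω) − Y_{0,M0(ω)}(ω) = 0, has positive μ-measure. That is, the total effect, total direct effect, pure direct effect, and principal stratum direct effect (with M1(ω)=M0(ω)=0) all equal 1 for such ω, and the total indirect and pure indirect effects are both 0. -/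

import Mathlib

open MeasureTheory ProbabilityTheory

/-- Conditional probability `P(A | B) = mu(A ∩ B) / mu(B)` as a real number. -/
noncomputable def condP {Ω : Type*} [MeasurableSpace Ω] (μ : Measure Ω)
    (A B : Set Ω) : ℝ :=
  (μ (A ∩ B)).toReal / (μ B).toReal

theorem statement6
    {Ω : Type*} [MeasurableSpace Ω] (μ : Measure Ω) [IsProbabilityMeasure μ]
    (Y1 Y0 M1 M0 X Y M : Ω → ℕ)
    (hY1meas : Measurable Y1) (hY0meas : Measurable Y0)
    (hM1meas : Measurable M1) (hM0meas : Measurable M0)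
    (hXmeas : Measurable X)
    (hY1bin : ∀ ω, Y1 ω ≤ 1) (hY0bin : ∀ ω, Y0 ω ≤ 1)
    (hM1bin : ∀ ω, M1 ω ≤ 1) (hM0bin : ∀ ω, M0 ω ≤ 1)
    (hXbin : ∀ ω, X ω ≤ 1)
    (hXpos : 0 < μ {ω | X ω = 1}) (hXlt : μ {ω | X ω = 1} < 1)
    (hindep : IndepFun X (fun ω => (Y1 ω, Y0 ω, M1 ω, M0 ω)) μ)
    (hYcons1 : ∀ ω, X ω = 1 → Y ω = Y1 ω)
    (hYcons0 : ∀ ω, X ω = 0 → Y ω = Y0 ω)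
    (hMcons1 : ∀ ω, X ω = 1 → M ω = M1 ω)
    (hMcons0 : ∀ ω, X ω = 0 → M ω = M0 ω)
    (hmono : ∀ ω, M0 ω ≤ M1 ω)
    (Ynest : ℕ → ℕ → Ω → ℕ)
    (hYnestmeas : ∀ x m', Measurable (Ynest x m'))
    (hYnestbin : ∀ x m' ω, Ynest x m' ω ≤ 1)
    (hcomp1 : ∀ ω, Ynest 1 (M1 ω) ω = Y1 ω)
    (hcomp0 : ∀ ω, Ynest 0 (M0 ω) ω = Y0 ω)
    (hemp : condP μ {ω | Y ω = 1 ∧ M ω = 0} {ω | X ω = 1}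
        > condP μ {ω | Y ω = 1 ∧ M ω = 0} {ω | X ω = 0}) :
    0 < μ {ω | M1 ω = 0 ∧ M0 ω = 0 ∧ (Y1 ω : ℤ) - (Y0 ω : ℤ) = 1 ∧
      (Ynest 1 (M1 ω) ω : ℤ) - (Ynest 0 (M0 ω) ω : ℤ) = 1 ∧
      (Ynest 1 (M1 ω) ω : ℤ) - (Ynest 0 (M1 ω) ω : ℤ) = 1 ∧
      (Ynest 1 (M0 ω) ω : ℤ) - (Ynest 0 (M0 ω) ω : ℤ) = 1 ∧
      (Ynest 1 (M1 ω) ω : ℤ) - (Ynest 1 (M0 ω) ω : ℤ) = 0 ∧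
      (Ynest 0 (M1 ω) ω : ℤ) - (Ynest 0 (M0 ω) ω : ℤ) = 0} := by
  -- basic facts about X
  have hX01 : ∀ ω, X ω = 0 ∨ X ω = 1 := fun ω => by have := hXbin ω; omega
  have hX0c : {ω | X ω = 0} = {ω | X ω = 1}ᶜ := by
    ext ω; simp only [Set.mem_setOf_eq, Set.mem_compl_iff]
    have := hX01 ω; omega
  have hX1meas : MeasurableSet {ω | X ω = 1} := hXmeas (measurableSet_singleton 1)
  have hX0pos : 0 < μ {ω | X ω = 0} := by
    rw [hX0c, measure_compl hX1meas (measure_ne_top μ _), measure_univ]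
    exact tsub_pos_of_lt hXlt
  set V : Ω → ℕ × ℕ × ℕ × ℕ := fun ω => (Y1 ω, Y0 ω, M1 ω, M0 ω) with hVdef
  set SA : Set (ℕ × ℕ × ℕ × ℕ) := {p | p.1 = 1 ∧ p.2.2.1 = 0} with hSA
  set SB : Set (ℕ × ℕ × ℕ × ℕ) := {p | p.2.1 = 1 ∧ p.2.2.2 = 0} with hSB
  have hsetA : {ω | Y ω = 1 ∧ M ω = 0} ∩ {ω | X ω = 1} = X ⁻¹' {1} ∩ V ⁻¹' SA := by
    ext ω
    simp only [Set.mem_inter_iff, Set.mem_setOf_eq, Set.mem_preimage, Set.mem_singleton_iff,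
      hVdef, hSA]
    constructor
    · rintro ⟨⟨hy, hm⟩, hx⟩
      exact ⟨hx, (hYcons1 ω hx).symm.trans hy, (hMcons1 ω hx).symm.trans hm⟩
    · rintro ⟨hx, hy, hm⟩
      exact ⟨⟨(hYcons1 ω hx).trans hy, (hMcons1 ω hx).trans hm⟩, hx⟩
  have hsetB : {ω | Y ω = 1 ∧ M ω = 0} ∩ {ω | X ω = 0} = X ⁻¹' {0} ∩ V ⁻¹' SB := by
    ext ω
    simp only [Set.mem_inter_iff, Set.mem_setOf_eq, Set.mem_preimage, Set.mem_singleton_iff,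
      hVdef, hSB]
    constructor
    · rintro ⟨⟨hy, hm⟩, hx⟩
      exact ⟨hx, (hYcons0 ω hx).symm.trans hy, (hMcons0 ω hx).symm.trans hm⟩
    · rintro ⟨hx, hy, hm⟩
      exact ⟨⟨(hYcons0 ω hx).trans hy, (hMcons0 ω hx).trans hm⟩, hx⟩
  have hmulA : μ (X ⁻¹' {1} ∩ V ⁻¹' SA) = μ (X ⁻¹' {1}) * μ (V ⁻¹' SA) :=
    hindep.measure_inter_preimage_eq_mul _ _ (measurableSet_singleton 1)
      ((Set.to_countable SA).measurableSet)
  have hmulB : μ (X ⁻¹' {0} ∩ V ⁻¹' SB) = μ (X ⁻¹' {0}) * μ (V ⁻¹' SB) :=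
    hindep.measure_inter_preimage_eq_mul _ _ (measurableSet_singleton 0)
      ((Set.to_countable SB).measurableSet)
  have hpreX1 : X ⁻¹' {1} = {ω | X ω = 1} := rfl
  have hpreX0 : X ⁻¹' {0} = {ω | X ω = 0} := rfl
  have hcondA : condP μ {ω | Y ω = 1 ∧ M ω = 0} {ω | X ω = 1} = (μ (V ⁻¹' SA)).toReal := by
    unfold condP
    rw [hsetA, hmulA, hpreX1, ENNReal.toReal_mul]
    have hne : (μ {ω | X ω = 1}).toReal ≠ 0 := by
      have := ENNReal.toReal_pos hXpos.ne' (measure_ne_top μ _)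
      exact this.ne'
    field_simp
  have hcondB : condP μ {ω | Y ω = 1 ∧ M ω = 0} {ω | X ω = 0} = (μ (V ⁻¹' SB)).toReal := by
    unfold condP
    rw [hsetB, hmulB, hpreX0, ENNReal.toReal_mul]
    have hne : (μ {ω | X ω = 0}).toReal ≠ 0 := by
      have := ENNReal.toReal_pos hX0pos.ne' (measure_ne_top μ _)
      exact this.ne'
    field_simp
  rw [hcondA, hcondB] at hemp
  have hlt : μ (V ⁻¹' SB) < μ (V ⁻¹' SA) := by
    by_contra h
    push_neg at h
    exact absurd (ENNReal.toReal_mono (measure_ne_top μ _) h) (not_le.mpr hemp)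
  -- pass to the key set
  set A : Set Ω := {ω | Y1 ω = 1 ∧ M1 ω = 0 ∧ Y0 ω = 0} with hA
  have hApos : 0 < μ A := by
    by_contra h
    push_neg at h
    have hA0 : μ A = 0 := le_antisymm (by simpa using h) zero_le
    have hsub : V ⁻¹' SA ⊆ A ∪ V ⁻¹' SB := by
      intro ω hω
      simp only [Set.mem_preimage, hVdef, hSA, Set.mem_setOf_eq] at hω
      obtain ⟨hy1, hm1⟩ := hω
      have hm0 : M0 ω = 0 := by have := hmono ω; omega
      rcases Nat.eq_zero_or_pos (Y0 ω) with hy0 | hy0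
      · exact Or.inl ⟨hy1, hm1, hy0⟩
      · right
        have hy0' : Y0 ω = 1 := by have := hY0bin ω; omega
        simp only [Set.mem_preimage, hVdef, hSB, Set.mem_setOf_eq]
        exact ⟨hy0', hm0⟩
    have hle : μ (V ⁻¹' SA) ≤ μ A + μ (V ⁻¹' SB) :=
      (measure_mono hsub).trans (measure_union_le _ _)
    rw [hA0, zero_add] at hle
    exact absurd hle (not_le.mpr hlt)
  refine lt_of_lt_of_le hApos (measure_mono ?_)
  rintro ω ⟨hy1, hm1, hy0⟩
  have hm0 : M0 ω = 0 := by have := hmono ω; omega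
  have he1 : Ynest 1 0 ω = 1 := by have := hcomp1 ω; rw [hm1] at this; omega
  have he0 : Ynest 0 0 ω = 0 := by have := hcomp0 ω; rw [hm0] at this; omega
  simp only [Set.mem_setOf_eq, hm1, hm0, he1, he0, hy1, hy0]
  norm_num
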